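/- arXiv:1309.6072 — 2 statements merged into one kernel-verified Lean document; each statement's English description precedes it below -/
import Mathlib

section
/- Let a ∈ 𝔻, M ≥ 1, ε > 0, and suppose τ : 𝔻 → (0,∞) satisfies: (B) |τ(z) − τ(ζ)| ≤ c₂|z − ζ|, and (E) for each m ≥ 1 there are bₘ > 0 and 0 < tₘ < 1/m with τ(z) ≤ τ(ξ) + tₘ|z − ξ| whenever |z − ξ| > bₘτ(ξ). Then there exists β > 0 (depending only on M, ε, c₂ and the data in (E)) such that the function φ_a(z) = (M/4)·log(1 + |z − a|²/(β²τ(a)²)) satisfies |∂φ_a(z)|² ≤ ε/τ(z)² and Δφ_a(z) ≤ ε/τ(z)² for all z ∈ 𝔻. -/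
open Complex MeasureTheory Metric Set Filter

set_option maxHeartbeats 1000000
noncomputable section

def 𝔻 : Set ℂ := Metric.ball 0 1

/-- The Laplacian of a function `f : ℂ → ℝ`. -/
def lapl (f : ℂ → ℝ) (z : ℂ) : ℝ :=
  fderiv ℝ (fun w => fderiv ℝ f w 1) z 1 +
    fderiv ℝ (fun w => fderiv ℝ f w Complex.I) z Complex.I

/-- The Wirtinger derivative `∂ = (1/2)(∂/∂x - i ∂/∂y)` of `f : ℂ → ℝ`. -/
def wirt (f : ℂ → ℝ) (z : ℂ) : ℂ :=
  (1 / 2 : ℂ) * (((fderiv ℝ f z 1 : ℝ) : ℂ) - Complex.I * ((fderiv ℝ f z Complex.I : ℝ) : ℂ))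

/-- The class 𝓛 : positive, dominated by `c₁(1-|z|)`, Lipschitz with constant `c₂`. -/
structure IsClassL (τ : ℂ → ℝ) (c₁ c₂ : ℝ) : Prop where
  pos : ∀ z ∈ 𝔻, 0 < τ z
  bnd : ∀ z ∈ 𝔻, τ z ≤ c₁ * (1 - ‖z‖)
  lip : ∀ z ∈ 𝔻, ∀ ζ ∈ 𝔻, |τ z - τ ζ| ≤ c₂ * ‖z - ζ‖

/-- The class 𝓛* : `ω = e^{-2φ}` with `φ ∈ C²`, `Δφ > 0`, `(Δφ)^{-1/2} ≍ τ ∈ 𝓛`. -/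
structure IsClassLStar (ω φ τ : ℂ → ℝ) (c₁ c₂ : ℝ) : Prop where
  isL : IsClassL τ c₁ c₂
  weq : ∀ z ∈ 𝔻, ω z = Real.exp (-2 * φ z)
  smooth : ContDiffOn ℝ 2 φ 𝔻
  lapPos : ∀ z ∈ 𝔻, 0 < lapl φ z
  comp : ∃ C > 0, ∀ z ∈ 𝔻,
    C⁻¹ * τ z ≤ lapl φ z ^ (-(1 / 2) : ℝ) ∧ lapl φ z ^ (-(1 / 2) : ℝ) ≤ C * τ z

/-- Condition (E). -/
def ConditionE (τ : ℂ → ℝ) : Prop :=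
  ∀ m : ℕ, 1 ≤ m → ∃ b t : ℝ, 0 < b ∧ 0 < t ∧ t < 1 / m ∧
    ∀ z ∈ 𝔻, ∀ ξ ∈ 𝔻, b * τ ξ < ‖z - ξ‖ →
      τ z ≤ τ ξ + t * ‖z - ξ‖

/-- The class 𝓔 : class 𝓛* together with condition (E) for τ. -/
structure IsClassE (ω φ τ : ℂ → ℝ) (c₁ c₂ : ℝ) : Prop where
  isLStar : IsClassLStar ω φ τ c₁ c₂
  condE : ConditionE τ

/-- Membership in the weighted Bergman space `A^p(w)` on the unit disc. -/
def MemAp (p : ℝ) (w : ℂ → ℝ) (f : ℂ → ℂ) : Prop :=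
  DifferentiableOn ℂ f 𝔻 ∧
    IntegrableOn (fun z => ‖f z‖ ^ p * w z) 𝔻 volume

/-- `K` is the reproducing kernel of `A²(ω)`. -/
def IsRK (ω : ℂ → ℝ) (K : ℂ → ℂ → ℂ) : Prop :=
  ∀ z ∈ 𝔻, MemAp 2 ω (K z) ∧
    ∀ f : ℂ → ℂ, MemAp 2 ω f →
      f z = ∫ ξ in 𝔻, f ξ * (starRingEnd ℂ) (K z ξ) * (ω ξ : ℂ)

/-- The Bergman projection associated to the weight `ω` and kernel `K`. -/
def Pw (ω : ℂ → ℝ) (K : ℂ → ℂ → ℂ) (f : ℂ → ℂ) (z : ℂ) : ℂ :=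
  ∫ ξ in 𝔻, f ξ * (starRingEnd ℂ) (K z ξ) * (ω ξ : ℂ)


namespace StmtAux

def L (a z : ℂ) : ℂ →L[ℝ] ℝ :=
  (2 * (z.re - a.re)) • Complex.reCLM + (2 * (z.im - a.im)) • Complex.imCLM

@[simp] lemma L_apply_one (a z : ℂ) : L a z 1 = 2 * (z.re - a.re) := by simp [L]
@[simp] lemma L_apply_I (a z : ℂ) : L a z Complex.I = 2 * (z.im - a.im) := by simp [L]

def hh (a z : ℂ) : ℝ := (z.re - a.re)^2 + (z.im - a.im)^2

lemma hh_nonneg (a z : ℂ) : 0 ≤ hh a z := by unfold hh; positivity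

lemma hasFDerivAt_hh (a z : ℂ) : HasFDerivAt (hh a) (L a z) z := by
  have h1 : HasFDerivAt (fun w : ℂ => w.re - a.re) (Complex.reCLM : ℂ →L[ℝ] ℝ) z :=
    (Complex.reCLM.hasFDerivAt).sub_const _
  have h2 : HasFDerivAt (fun w : ℂ => w.im - a.im) (Complex.imCLM : ℂ →L[ℝ] ℝ) z :=
    (Complex.imCLM.hasFDerivAt).sub_const _
  have h : HasFDerivAt (fun w : ℂ => (w.re - a.re) * (w.re - a.re) + (w.im - a.im) * (w.im - a.im)) _ z :=
    (h1.mul h1).add (h2.mul h2)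
  have he : (fun w : ℂ => (w.re - a.re) * (w.re - a.re) + (w.im - a.im) * (w.im - a.im)) = hh a := by
    funext w; simp [hh, sq]
  rw [he] at h
  refine h.congr_fderiv ?_
  simp [L, two_mul, add_smul]

def phi (a : ℂ) (C s : ℝ) (w : ℂ) : ℝ := C * Real.log (1 + hh a w / s)

lemma hasFDerivAt_phi (a : ℂ) (C : ℝ) {s : ℝ} (hs : 0 < s) (z : ℂ) :
    HasFDerivAt (phi a C s) ((C / (s + hh a z)) • L a z) z := by
  have hg : HasFDerivAt (fun w => 1 + hh a w / s) (s⁻¹ • L a z) z := by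
    have := ((hasFDerivAt_hh a z).const_mul s⁻¹).const_add 1
    simpa [div_eq_mul_inv, mul_comm] using this
  have hpos : 0 < 1 + hh a z / s := by
    have := hh_nonneg a z; positivity
  have hl := (Real.hasDerivAt_log hpos.ne').comp_hasFDerivAt z hg
  have h := hl.const_mul C
  have heq : (C / (s + hh a z)) • L a z = C • ((1 + hh a z / s)⁻¹ • (s⁻¹ • L a z)) := by
    rw [smul_smul, smul_smul, div_eq_mul_inv]
    rw [mul_assoc, ← mul_inv]
    congr 2
    field_simp
  rw [heq]
  exact h

lemma fderiv_phi_one (a : ℂ) (C : ℝ) {s : ℝ} (hs : 0 < s) (z : ℂ) :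
    fderiv ℝ (phi a C s) z 1 = 2 * C * (z.re - a.re) / (s + hh a z) := by
  rw [(hasFDerivAt_phi a C hs z).fderiv]
  simp
  ring

lemma fderiv_phi_I (a : ℂ) (C : ℝ) {s : ℝ} (hs : 0 < s) (z : ℂ) :
    fderiv ℝ (phi a C s) z Complex.I = 2 * C * (z.im - a.im) / (s + hh a z) := by
  rw [(hasFDerivAt_phi a C hs z).fderiv]
  simp
  ring

lemma hasFDerivAt_F1 (a : ℂ) (C : ℝ) {s : ℝ} (hs : 0 < s) (z : ℂ) :
    HasFDerivAt (fun w => 2 * C * (w.re - a.re) / (s + hh a w))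
      ((2 * C * (z.re - a.re)) • (-((s + hh a z) ^ 2)⁻¹ • L a z)
        + (s + hh a z)⁻¹ • ((2 * C) • (Complex.reCLM : ℂ →L[ℝ] ℝ))) z := by
  have hd : 0 < s + hh a z := by have := hh_nonneg a z; linarith
  have hf : HasFDerivAt (fun w : ℂ => 2 * C * (w.re - a.re))
      ((2 * C) • (Complex.reCLM : ℂ →L[ℝ] ℝ)) z :=
    ((Complex.reCLM.hasFDerivAt).sub_const _).const_mul _
  have hg : HasFDerivAt (fun w : ℂ => (s + hh a w)⁻¹)
      (-((s + hh a z) ^ 2)⁻¹ • L a z) z :=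
    (hasDerivAt_inv hd.ne').comp_hasFDerivAt z ((hasFDerivAt_hh a z).const_add s)
  have : HasFDerivAt (fun w : ℂ => 2 * C * (w.re - a.re) * (s + hh a w)⁻¹) _ z := hf.mul hg
  simpa [div_eq_mul_inv] using this

lemma hasFDerivAt_F2 (a : ℂ) (C : ℝ) {s : ℝ} (hs : 0 < s) (z : ℂ) :
    HasFDerivAt (fun w => 2 * C * (w.im - a.im) / (s + hh a w))
      ((2 * C * (z.im - a.im)) • (-((s + hh a z) ^ 2)⁻¹ • L a z)
        + (s + hh a z)⁻¹ • ((2 * C) • (Complex.imCLM : ℂ →L[ℝ] ℝ))) z := by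
  have hd : 0 < s + hh a z := by have := hh_nonneg a z; linarith
  have hf : HasFDerivAt (fun w : ℂ => 2 * C * (w.im - a.im))
      ((2 * C) • (Complex.imCLM : ℂ →L[ℝ] ℝ)) z :=
    ((Complex.imCLM.hasFDerivAt).sub_const _).const_mul _
  have hg : HasFDerivAt (fun w : ℂ => (s + hh a w)⁻¹)
      (-((s + hh a z) ^ 2)⁻¹ • L a z) z :=
    (hasDerivAt_inv hd.ne').comp_hasFDerivAt z ((hasFDerivAt_hh a z).const_add s)
  have : HasFDerivAt (fun w : ℂ => 2 * C * (w.im - a.im) * (s + hh a w)⁻¹) _ z := hf.mul hg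
  simpa [div_eq_mul_inv] using this

lemma lapl_phi (a : ℂ) (C : ℝ) {s : ℝ} (hs : 0 < s) (z : ℂ) :
    lapl (phi a C s) z = 4 * C * s / (s + hh a z) ^ 2 := by
  have hd : 0 < s + hh a z := by have := hh_nonneg a z; linarith
  have k1 : (fun w => fderiv ℝ (phi a C s) w 1)
      = fun w => 2 * C * (w.re - a.re) / (s + hh a w) :=
    funext fun w => fderiv_phi_one a C hs w
  have k2 : (fun w => fderiv ℝ (phi a C s) w Complex.I)
      = fun w => 2 * C * (w.im - a.im) / (s + hh a w) :=
    funext fun w => fderiv_phi_I a C hs w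
  rw [lapl, k1, k2, (hasFDerivAt_F1 a C hs z).fderiv, (hasFDerivAt_F2 a C hs z).fderiv]
  simp only [ContinuousLinearMap.add_apply, ContinuousLinearMap.smul_apply,
    L_apply_one, L_apply_I, Complex.reCLM_apply, Complex.imCLM_apply,
    Complex.one_re, Complex.one_im, Complex.I_re, Complex.I_im, smul_eq_mul, hh]
  field_simp
  ring

lemma wirt_phi_sq (a : ℂ) (C : ℝ) {s : ℝ} (hs : 0 < s) (z : ℂ) :
    ‖wirt (phi a C s) z‖ ^ 2 = C ^ 2 * hh a z / (s + hh a z) ^ 2 := by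
  have hd : 0 < s + hh a z := by have := hh_nonneg a z; linarith
  rw [wirt, fderiv_phi_one a C hs z, fderiv_phi_I a C hs z, Complex.sq_norm,
    Complex.normSq_apply]
  simp only [Complex.mul_re, Complex.mul_im, Complex.sub_re, Complex.sub_im,
    Complex.ofReal_re, Complex.ofReal_im, Complex.I_re, Complex.I_im,
    Complex.div_re, Complex.div_im, Complex.one_re, Complex.one_im,
    Complex.normSq_ofNat, Complex.ofReal_ofNat, Complex.re_ofNat, Complex.im_ofNat]
  rw [show hh a z = (z.re - a.re)^2 + (z.im - a.im)^2 from rfl]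
  field_simp
  ring

end StmtAux

open StmtAux in
theorem stmt2 (τ : ℂ → ℝ) (c₂ : ℝ)
    (hpos : ∀ z ∈ 𝔻, 0 < τ z)
    (hlip : ∀ z ∈ 𝔻, ∀ ζ ∈ 𝔻, |τ z - τ ζ| ≤ c₂ * ‖z - ζ‖)
    (hE : ConditionE τ)
    (a : ℂ) (ha : a ∈ 𝔻) (M ε : ℝ) (hM : 1 ≤ M) (hε : 0 < ε) :
    ∃ β > 0, ∀ z ∈ 𝔻,
      ‖wirt (fun w => M / 4 *
          Real.log (1 + ‖w - a‖ ^ 2 / (β ^ 2 * τ a ^ 2))) z‖ ^ 2 ≤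
        ε / τ z ^ 2 ∧
      lapl (fun w => M / 4 *
          Real.log (1 + ‖w - a‖ ^ 2 / (β ^ 2 * τ a ^ 2))) z ≤
        ε / τ z ^ 2 := by
  have hτa : 0 < τ a := hpos a ha
  have hM0 : (0:ℝ) < M := lt_of_lt_of_le one_pos hM
  -- choose m and get b, t from condition (E)
  obtain ⟨b, t, hb, ht, htm, hEst⟩ := hE (⌈Real.sqrt (2 * M ^ 2 / ε)⌉₊ + 1) (Nat.le_add_left 1 _)
  have hm0 : (0:ℝ) < ((⌈Real.sqrt (2 * M ^ 2 / ε)⌉₊ + 1 : ℕ) : ℝ) := by positivity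
  have hsqrt_le : Real.sqrt (2 * M ^ 2 / ε) ≤ ((⌈Real.sqrt (2 * M ^ 2 / ε)⌉₊ + 1 : ℕ) : ℝ) := by
    calc Real.sqrt (2 * M ^ 2 / ε) ≤ (⌈Real.sqrt (2 * M ^ 2 / ε)⌉₊ : ℝ) := Nat.le_ceil _
    _ ≤ _ := by push_cast; linarith
  have ht2 : 2 * M ^ 2 * t ^ 2 ≤ ε := by
    have h1 : t * ((⌈Real.sqrt (2 * M ^ 2 / ε)⌉₊ + 1 : ℕ) : ℝ) < 1 := by
      rw [lt_div_iff₀ hm0] at htm; exact htm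
    have h3 : t * Real.sqrt (2 * M ^ 2 / ε) < 1 :=
      lt_of_le_of_lt (mul_le_mul_of_nonneg_left hsqrt_le ht.le) h1
    have hsq : Real.sqrt (2 * M ^ 2 / ε) ^ 2 = 2 * M ^ 2 / ε :=
      Real.sq_sqrt (by positivity)
    have hnn : 0 ≤ t * Real.sqrt (2 * M ^ 2 / ε) :=
      mul_nonneg ht.le (Real.sqrt_nonneg _)
    have h4 : (t * Real.sqrt (2 * M ^ 2 / ε)) ^ 2 < 1 := by nlinarith
    have h5 : t ^ 2 * (2 * M ^ 2 / ε) < 1 := by rw [mul_pow, hsq] at h4; linarith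
    have h6 : t ^ 2 * (2 * M ^ 2 / ε) * ε < ε := by nlinarith
    have h7 : t ^ 2 * (2 * M ^ 2 / ε) * ε = 2 * M ^ 2 * t ^ 2 := by
      field_simp
    linarith [h7 ▸ h6]
  clear htm hsqrt_le hm0
  -- choose β
  set K : ℝ := 1 + max c₂ 0 * b with hK_def
  have hmax0 : 0 ≤ max c₂ 0 := le_max_right _ _
  have hK1 : 1 ≤ K := by
    have : 0 ≤ max c₂ 0 * b := mul_nonneg hmax0 hb.le
    rw [hK_def]; linarith
  refine ⟨M * (K + 2) / Real.sqrt ε, by positivity, ?_⟩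
  set β : ℝ := M * (K + 2) / Real.sqrt ε with hβ_def
  have hβ0 : 0 < β := by positivity
  have hεs : ε * (β ^ 2 * τ a ^ 2) = M ^ 2 * (K + 2) ^ 2 * τ a ^ 2 := by
    rw [hβ_def, div_pow, mul_pow, Real.sq_sqrt hε.le]
    field_simp
  clear_value β
  set s : ℝ := β ^ 2 * τ a ^ 2 with hs_def
  have hs : 0 < s := by positivity
  clear_value s
  clear_value K
  intro z hz
  have hτz : 0 < τ z := hpos z hz
  have hfun : (fun w => M / 4 *
      Real.log (1 + ‖w - a‖ ^ 2 / s)) = StmtAux.phi a (M / 4) s := by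
    funext w
    have habs : ‖w - a‖ ^ 2 = StmtAux.hh a w := by
      simp only [Complex.sq_norm, Complex.normSq_apply, Complex.sub_re, Complex.sub_im,
        StmtAux.hh]
      ring
    rw [StmtAux.phi, habs]
  have hhz : StmtAux.hh a z = ‖z - a‖ ^ 2 := by
    simp only [Complex.sq_norm, Complex.normSq_apply, Complex.sub_re, Complex.sub_im,
      StmtAux.hh]
    ring
  have hhn : 0 ≤ StmtAux.hh a z := StmtAux.hh_nonneg a z
  -- key inequality
  have key : M ^ 2 * τ z ^ 2 ≤ ε * (s + StmtAux.hh a z) := by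
    rcases le_or_gt (‖z - a‖) (b * τ a) with hcase | hcase
    · -- near case: Lipschitz
      have hl := hlip z hz a ha
      have habs : |τ z - τ a| ≤ max c₂ 0 * ‖z - a‖ :=
        hl.trans (mul_le_mul_of_nonneg_right (le_max_left _ _) (norm_nonneg _))
      have h1 : τ z ≤ τ a + max c₂ 0 * ‖z - a‖ := by
        have := (abs_le.mp habs).2
        linarith
      have h2 : max c₂ 0 * ‖z - a‖ ≤ max c₂ 0 * (b * τ a) :=
        mul_le_mul_of_nonneg_left hcase hmax0
      have h3 : τ z ≤ K * τ a := by rw [hK_def]; nlinarith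
      have h4 : τ z ^ 2 ≤ (K * τ a) ^ 2 := by nlinarith
      have h5 : M ^ 2 * τ z ^ 2 ≤ M ^ 2 * ((K * τ a) ^ 2) :=
        mul_le_mul_of_nonneg_left h4 (by positivity)
      have hK2 : K ^ 2 ≤ (K + 2) ^ 2 := by nlinarith
      have h6 : M ^ 2 * ((K * τ a) ^ 2) ≤ ε * s :=
        calc M ^ 2 * ((K * τ a) ^ 2) = K ^ 2 * (M ^ 2 * τ a ^ 2) := by ring
          _ ≤ (K + 2) ^ 2 * (M ^ 2 * τ a ^ 2) :=
              mul_le_mul_of_nonneg_right hK2 (by positivity)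
          _ = ε * s := by rw [hεs]; ring
      linarith [mul_nonneg hε.le hhn]
    · -- far case: condition (E)
      have hEz := hEst z hz a ha hcase
      have hr0 : 0 ≤ ‖z - a‖ := norm_nonneg _
      have h1 : M ^ 2 * τ z ^ 2 ≤ M ^ 2 * (τ a + t * ‖z - a‖) ^ 2 := by
        have h4 : τ z ^ 2 ≤ (τ a + t * ‖z - a‖) ^ 2 := by nlinarith
        exact mul_le_mul_of_nonneg_left h4 (by positivity)
      have h2 : M ^ 2 * (τ a + t * ‖z - a‖) ^ 2 ≤
          2 * M ^ 2 * τ a ^ 2 + 2 * M ^ 2 * t ^ 2 * ‖z - a‖ ^ 2 := by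
        nlinarith [sq_nonneg (τ a - t * ‖z - a‖), sq_nonneg M]
      have hK2 : (2:ℝ) ≤ (K + 2) ^ 2 := by nlinarith
      have h3 : 2 * M ^ 2 * τ a ^ 2 ≤ ε * s :=
        calc 2 * M ^ 2 * τ a ^ 2 = 2 * (M ^ 2 * τ a ^ 2) := by ring
          _ ≤ (K + 2) ^ 2 * (M ^ 2 * τ a ^ 2) :=
              mul_le_mul_of_nonneg_right hK2 (by positivity)
          _ = ε * s := by rw [hεs]; ring
      have h4 : 2 * M ^ 2 * t ^ 2 * ‖z - a‖ ^ 2 ≤ ε * ‖z - a‖ ^ 2 :=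
        mul_le_mul_of_nonneg_right ht2 (sq_nonneg _)
      rw [hhz, mul_add]
      linarith
  have hd : 0 < s + StmtAux.hh a z := by linarith
  rw [hfun]
  constructor
  · rw [StmtAux.wirt_phi_sq a (M / 4) hs z, div_le_div_iff₀ (by positivity) (by positivity)]
    nlinarith [mul_le_mul_of_nonneg_left key hhn, mul_nonneg hε.le hd.le, hs.le, hhn,
      mul_nonneg (mul_nonneg hε.le hd.le) hhn]
  · rw [StmtAux.lapl_phi a (M / 4) hs z, div_le_div_iff₀ (by positivity) (by positivity)]
    have hMM : M ≤ M ^ 2 := by nlinarith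
    have hMτ : M * τ z ^ 2 ≤ ε * (s + StmtAux.hh a z) := by
      have := mul_le_mul_of_nonneg_right hMM (sq_nonneg (τ z))
      linarith
    nlinarith [mul_le_mul_of_nonneg_left hMτ hs.le, mul_nonneg hε.le hd.le,
      mul_nonneg (mul_nonneg hε.le hd.le) hs.le, hhn]
end
end

section
/- Let ω ∈ 𝓛* with associated function τ, 0 < p < ∞, β ∈ ℝ, and z ∈ 𝔻. Then there exist M ≥ 1 and δ₀ > 0 such that for every δ ∈ (0, δ₀) and every f holomorphic on a neighbourhood of the closed disc D(z, δτ(z)): |f(z)|^p ω(z)^β ≤ (M/(δ²τ(z)²)) ∫_{D(z, δτ(z))} |f(ξ)|^p ω(ξ)^β dA(ξ). -/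
open Complex MeasureTheory Metric Set Filter

noncomputable section

namespace Stmt4Aux

open Real

/-- Circle sub-mean value inequality. -/
lemma circle_mean {f : ℂ → ℂ} {c : ℂ} {r : ℝ} (hr : 0 < r)
    (hf : DifferentiableOn ℂ f (closedBall c r)) :
    2 * π * ‖f c‖ ≤ ∫ θ in Ioo (-π) π, ‖f (circleMap c r θ)‖ := by
  have hcont : Continuous fun θ => f (circleMap c r θ) :=
    hf.continuousOn.comp_continuous (continuous_circleMap c r)
      (fun θ => circleMap_mem_closedBall c hr.le θ)
  have key : (∮ ζ in C(c, r), (ζ - c)⁻¹ • f ζ) = (2 * π * Complex.I : ℂ) • f c :=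
    hf.circleIntegral_sub_inv_smul (mem_ball_self hr)
  have h1 : (∮ ζ in C(c, r), (ζ - c)⁻¹ • f ζ)
      = Complex.I • ∫ θ in (0)..(2*π), f (circleMap c r θ) := by
    rw [circleIntegral, ← intervalIntegral.integral_smul]
    refine intervalIntegral.integral_congr fun θ _ => ?_
    have hne : circleMap 0 r θ ≠ 0 := by
      simpa using circleMap_ne_center (c := (0:ℂ)) hr.ne' (θ := θ)
    simp only [deriv_circleMap, circleMap_sub_center, smul_eq_mul]
    field_simp
  have h2 : (∫ θ in (0)..(2*π), f (circleMap c r θ)) = ((2 * π : ℝ) : ℂ) * f c := by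
    rw [h1] at key
    apply mul_left_cancel₀ Complex.I_ne_zero
    rw [show Complex.I * (((2*π:ℝ):ℂ) * f c) = (2 * ↑π * Complex.I : ℂ) • f c by
      push_cast; simp [smul_eq_mul]; ring]
    simpa [smul_eq_mul] using key
  have h3 : 2 * π * ‖f c‖ ≤ ∫ θ in (0)..(2*π), ‖f (circleMap c r θ)‖ := by
    have := intervalIntegral.norm_integral_le_integral_norm
      (f := fun θ => f (circleMap c r θ)) (a := 0) (b := 2*π) (μ := volume) (by positivity)
    rw [h2] at this
    calc 2 * π * ‖f c‖ = ‖((2 * π : ℝ) : ℂ) * f c‖ := by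
          rw [norm_mul, Complex.norm_real, Real.norm_eq_abs,
            abs_of_pos (by positivity : (0:ℝ) < 2 * π)]
      _ ≤ _ := this
  have hper : Function.Periodic (fun θ => ‖f (circleMap c r θ)‖) (2*π) :=
    (periodic_circleMap c r).comp fun w => ‖f w‖
  have h4 : (∫ θ in (0)..(2*π), ‖f (circleMap c r θ)‖)
      = ∫ θ in (-π)..(π), ‖f (circleMap c r θ)‖ := by
    have := hper.intervalIntegral_add_eq 0 (-π)
    rw [zero_add, show -π + 2*π = π by ring] at this
    exact this
  rw [h4, intervalIntegral.integral_of_le (by linarith [Real.pi_pos]),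
    MeasureTheory.integral_Ioc_eq_integral_Ioo] at h3
  exact h3

/-- Area sub-mean value inequality for the modulus. -/
lemma area_mean {f : ℂ → ℂ} {c : ℂ} {R : ℝ} (hR : 0 < R)
    (hf : DifferentiableOn ℂ f (closedBall c R)) :
    π * R ^ 2 * ‖f c‖ ≤ ∫ ξ in ball c R, ‖f ξ‖ := by
  have hcont : ContinuousOn f (closedBall c R) := hf.continuousOn
  set h : ℝ × ℝ → ℝ := fun q => q.1 * ‖f (circleMap c q.1 q.2)‖ with hh
  set S : Set (ℝ × ℝ) := Ioo (0:ℝ) R ×ˢ Ioo (-π) π with hS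
  -- continuity of the polar integrand
  have hmap : Continuous fun q : ℝ × ℝ => circleMap c q.1 q.2 := by
    simp only [circleMap]
    fun_prop
  have hmapsto : MapsTo (fun q : ℝ × ℝ => circleMap c q.1 q.2)
      (Icc 0 R ×ˢ Icc (-π) π) (closedBall c R) := by
    rintro ⟨r, θ⟩ ⟨hr, -⟩
    exact closedBall_subset_closedBall hr.2 (circleMap_mem_closedBall c hr.1 θ)
  have hhcont : ContinuousOn h (Icc 0 R ×ˢ Icc (-π) π) := by
    apply ContinuousOn.mul (continuous_fst.continuousOn)
    exact (hcont.comp hmap.continuousOn hmapsto).norm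
  have hhi : IntegrableOn h S := by
    apply (hhcont.integrableOn_compact (isCompact_Icc.prod isCompact_Icc)).mono_set
    exact Set.prod_mono Ioo_subset_Icc_self Ioo_subset_Icc_self
  have hball_int : IntegrableOn (fun ξ => ‖f ξ‖) (ball c R) :=
    (hcont.norm.integrableOn_compact (isCompact_closedBall c R)).mono_set
      ball_subset_closedBall
  -- Step A: write the ball integral as a full-plane integral of an indicator
  set F : ℂ → ℝ := (ball (0:ℂ) R).indicator fun w => ‖f (c + w)‖ with hF
  have stepA : (∫ ξ in ball c R, ‖f ξ‖) = ∫ w, F w := by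
    rw [← MeasureTheory.integral_indicator measurableSet_ball,
      ← MeasureTheory.integral_add_left_eq_self
        (μ := (volume : Measure ℂ)) ((ball c R).indicator fun ξ => ‖f ξ‖) c]
    have hiff : ∀ w : ℂ, c + w ∈ ball c R ↔ w ∈ ball (0:ℂ) R := by
      intro w
      simp [mem_ball, dist_eq_norm]
    refine integral_congr_ae (Eventually.of_forall fun w => ?_)
    by_cases hw : w ∈ ball (0:ℂ) R
    · show (ball c R).indicator (fun ξ => ‖f ξ‖) (c + w) = F w
      rw [Set.indicator_of_mem ((hiff w).mpr hw), hF, Set.indicator_of_mem hw]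
    · show (ball c R).indicator (fun ξ => ‖f ξ‖) (c + w) = F w
      rw [Set.indicator_of_notMem (fun h => hw ((hiff w).mp h)), hF,
        Set.indicator_of_notMem hw]
  -- Step B: polar coordinates
  have stepB : (∫ w, F w) = ∫ q in polarCoord.target, q.1 • F (Complex.polarCoord.symm q) :=
    (Complex.integral_comp_polarCoord_symm F).symm
  -- Step C: identify with an integral over S
  have hsymm_eq : ∀ q : ℝ × ℝ, c + Complex.polarCoord.symm q = circleMap c q.1 q.2 := by
    rintro ⟨r, θ⟩
    simp only [Complex.polarCoord_symm_apply, circleMap, Complex.exp_mul_I]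
    push_cast
    ring
  have stepC : (∫ q in polarCoord.target, q.1 • F (Complex.polarCoord.symm q))
      = ∫ q in S, h q := by
    have hsub : S ⊆ polarCoord.target := by
      rw [polarCoord_target]
      exact Set.prod_mono Ioo_subset_Ioi_self subset_rfl
    rw [show (∫ q in polarCoord.target, q.1 • F (Complex.polarCoord.symm q))
        = ∫ q in polarCoord.target, S.indicator h q from ?_,
      MeasureTheory.setIntegral_indicator (measurableSet_Ioo.prod measurableSet_Ioo),
      Set.inter_eq_self_of_subset_right hsub]
    refine setIntegral_congr_fun polarCoord.open_target.measurableSet fun q hq => ?_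
    obtain ⟨r, θ⟩ := q
    rw [polarCoord_target] at hq
    obtain ⟨hr, hθ⟩ := hq
    simp only [mem_Ioi] at hr
    have habs : ‖Complex.polarCoord.symm (r, θ)‖ = r := by
      rw [Complex.norm_polarCoord_symm]; exact abs_of_pos hr
    by_cases hrR : r < R
    · have hmem : Complex.polarCoord.symm (r, θ) ∈ ball (0:ℂ) R := by
        simp [mem_ball, dist_eq_norm, habs, abs_of_pos hr, hrR]
      have hmem' : (r, θ) ∈ S := by
        constructor
        · exact ⟨hr, hrR⟩
        · exact hθ
      rw [Set.indicator_of_mem hmem', hF, Set.indicator_of_mem hmem]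
      simp only [hh, smul_eq_mul]
      rw [hsymm_eq ⟨r, θ⟩]
    · have hmem : Complex.polarCoord.symm (r, θ) ∉ ball (0:ℂ) R := by
        intro hmemb
        rw [mem_ball, dist_zero_right, habs] at hmemb
        exact hrR hmemb
      have hmem' : (r, θ) ∉ S := by
        rintro ⟨⟨-, h2⟩, -⟩
        exact hrR h2
      rw [Set.indicator_of_notMem hmem', hF, Set.indicator_of_notMem hmem]
      simp
  -- Step D: Fubini
  have hhi' : Integrable h ((volume.restrict (Ioo (0:ℝ) R)).prod
      (volume.restrict (Ioo (-π) π))) := by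
    rwa [Measure.prod_restrict, ← Measure.volume_eq_prod]
  have stepD : (∫ q in S, h q)
      = ∫ r in Ioo (0:ℝ) R, ∫ θ in Ioo (-π) π, h (r, θ) := by
    rw [hS, Measure.volume_eq_prod, MeasureTheory.setIntegral_prod _ ?_]
    rwa [← Measure.volume_eq_prod]
  -- Step E: inner bound
  have inner_bd : ∀ r ∈ Ioo (0:ℝ) R,
      2 * π * ‖f c‖ * r ≤ ∫ θ in Ioo (-π) π, h (r, θ) := by
    intro r hr
    have hcm := circle_mean hr.1 (hf.mono (closedBall_subset_closedBall hr.2.le))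
    have : (∫ θ in Ioo (-π) π, h (r, θ))
        = r * ∫ θ in Ioo (-π) π, ‖f (circleMap c r θ)‖ := by
      simp only [hh]
      exact MeasureTheory.integral_const_mul r _
    rw [this]
    calc 2 * π * ‖f c‖ * r = r * (2 * π * ‖f c‖) := by ring
      _ ≤ r * ∫ θ in Ioo (-π) π, ‖f (circleMap c r θ)‖ :=
        mul_le_mul_of_nonneg_left hcm hr.1.le
  -- Step F: outer bound
  have houter_int : IntegrableOn (fun r => ∫ θ in Ioo (-π) π, h (r, θ)) (Ioo (0:ℝ) R) :=
    hhi'.integral_prod_left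
  have stepF : π * R ^ 2 * ‖f c‖ ≤ ∫ r in Ioo (0:ℝ) R, ∫ θ in Ioo (-π) π, h (r, θ) := by
    have hlow : (∫ r in Ioo (0:ℝ) R, 2 * π * ‖f c‖ * r) = π * R ^ 2 * ‖f c‖ := by
      rw [MeasureTheory.integral_const_mul, ← MeasureTheory.integral_Ioc_eq_integral_Ioo,
        ← intervalIntegral.integral_of_le hR.le, integral_id]
      ring
    rw [← hlow]
    apply MeasureTheory.setIntegral_mono_on
    · exact (((continuous_const.mul continuous_id).continuousOn).integrableOn_compact
        isCompact_Icc).mono_set Ioo_subset_Icc_self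
    · exact houter_int
    · exact measurableSet_Ioo
    · exact inner_bd
  rw [stepA, stepB, stepC, stepD]
  exact stepF

lemma norm_rpow_integrableOn {f : ℂ → ℂ} {c : ℂ} {R p : ℝ} (hp : 0 ≤ p)
    (hcont : ContinuousOn f (closedBall c R)) :
    IntegrableOn (fun ξ => ‖f ξ‖ ^ p) (ball c R) :=
  ((hcont.norm.rpow_const (fun _ _ => Or.inr hp)).integrableOn_compact
    (isCompact_closedBall c R)).mono_set ball_subset_closedBall

lemma rpow_ident {d R p : ℝ} (hd : 0 < d) (hR : 0 < R) (hp : 0 < p) :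
    (d / R) ^ (2 / p) * ((2 * R / d) ^ ((2 / p) * (1 - p))) * (4 / (π * d ^ 2))
      = 2 ^ (2 / p) / (π * R ^ 2) := by
  set x := d / (2 * R) with hx
  have hx0 : 0 < x := by positivity
  have h1 : d / R = 2 * x := by rw [hx]; field_simp
  have h2 : 2 * R / d = x⁻¹ := by rw [hx]; field_simp
  rw [h1, h2, Real.mul_rpow (by norm_num) hx0.le, Real.inv_rpow hx0.le,
    ← Real.rpow_neg hx0.le, mul_assoc (2 ^ (2/p)) _ _, ← Real.rpow_add hx0]
  have hexp : 2 / p + -(2 / p * (1 - p)) = 2 := by field_simp; ring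
  rw [hexp, show (2:ℝ) = ((2:ℕ):ℝ) by norm_num, Real.rpow_natCast]
  have hxval : x ^ (2:ℕ) = d ^ 2 / (4 * R ^ 2) := by rw [hx]; ring
  rw [hxval]
  field_simp

lemma submean_small {f : ℂ → ℂ} {c : ℂ} {R p : ℝ} (hp : 0 < p) (hp1 : p ≤ 1) (hR : 0 < R)
    (hf : DifferentiableOn ℂ f (closedBall c R)) :
    ‖f c‖ ^ p ≤ 2 ^ (2 / p) / (π * R ^ 2) * ∫ ξ in ball c R, ‖f ξ‖ ^ p := by
  have hcont : ContinuousOn f (closedBall c R) := hf.continuousOn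
  have hIp : IntegrableOn (fun ξ => ‖f ξ‖ ^ p) (ball c R) := norm_rpow_integrableOn hp.le hcont
  have hI0 : 0 ≤ ∫ ξ in ball c R, ‖f ξ‖ ^ p :=
    setIntegral_nonneg measurableSet_ball fun ξ _ => Real.rpow_nonneg (norm_nonneg _) p
  set I := ∫ ξ in ball c R, ‖f ξ‖ ^ p with hI
  set g : ℂ → ℝ := fun w => ((R - dist w c) / R) ^ (2 / p) * ‖f w‖ with hg
  have hgnonneg : ∀ w ∈ closedBall c R, 0 ≤ g w := by
    intro w hw
    have hwR : dist w c ≤ R := mem_closedBall.mp hw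
    have : 0 ≤ (R - dist w c) / R := div_nonneg (by linarith) hR.le
    exact mul_nonneg (Real.rpow_nonneg this _) (norm_nonneg _)
  have hgcont : ContinuousOn g (closedBall c R) := by
    apply ContinuousOn.mul ?_ hcont.norm
    apply ContinuousOn.rpow_const
    · fun_prop
    · intro w _
      right
      positivity
  obtain ⟨w₀, hw₀K, hw₀max⟩ := (isCompact_closedBall c R).exists_isMaxOn
    ⟨c, mem_closedBall_self hR.le⟩ hgcont
  have hw0R : dist w₀ c ≤ R := mem_closedBall.mp hw₀K
  have hgc : g c = ‖f c‖ := by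
    simp [hg, dist_self, div_self hR.ne']
  have hfcA : ‖f c‖ ≤ g w₀ := by rw [← hgc]; exact hw₀max (mem_closedBall_self hR.le)
  rcases eq_or_lt_of_le (hgnonneg w₀ hw₀K) with hA0 | hApos
  · have hfc0 : ‖f c‖ = 0 := le_antisymm (hfcA.trans (by rw [← hA0])) (norm_nonneg _)
    rw [hfc0, Real.zero_rpow hp.ne']
    exact mul_nonneg (by positivity) hI0
  · have hgw0 : g w₀ = ((R - dist w₀ c) / R) ^ (2 / p) * ‖f w₀‖ := by simp only [hg]
    have hXnn : 0 ≤ ((R - dist w₀ c) / R) ^ (2 / p) :=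
      Real.rpow_nonneg (div_nonneg (by linarith) hR.le) _
    have hApos' : 0 < ((R - dist w₀ c) / R) ^ (2 / p) * ‖f w₀‖ := hgw0 ▸ hApos
    have hfw₀pos : 0 < ‖f w₀‖ := by nlinarith [norm_nonneg (f w₀)]
    have hbase_pos : 0 < (R - dist w₀ c) / R := by
      by_contra hcon
      push_neg at hcon
      have hb0 : (R - dist w₀ c) / R = 0 :=
        le_antisymm hcon (div_nonneg (by linarith) hR.le)
      rw [hb0, Real.zero_rpow (by positivity : 2 / p ≠ 0), zero_mul] at hApos'
      exact lt_irrefl 0 hApos'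
    set d := R - dist w₀ c with hd
    have hdpos : 0 < d := by
      have := mul_pos hbase_pos hR
      rwa [div_mul_cancel₀ _ hR.ne'] at this
    set s := d / 2 with hs
    have hspos : 0 < s := by positivity
    have hsum : s + dist w₀ c ≤ R := by
      simp only [hs, hd]
      linarith
    have hsub2 : closedBall w₀ s ⊆ closedBall c R := closedBall_subset_closedBall' hsum
    have hballsub : ball w₀ s ⊆ ball c R := ball_subset_ball' hsum
    have harea := area_mean hspos (hf.mono hsub2)
    set A := g w₀ with hA
    set T := A * (R / s) ^ (2 / p) with hT
    have hTpos : 0 < T := mul_pos hApos (Real.rpow_pos_of_pos (by positivity) _)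
    have hfle : ∀ w ∈ ball w₀ s, ‖f w‖ ≤ T := by
      intro w hw
      have hwK : w ∈ closedBall c R := hsub2 (ball_subset_closedBall hw)
      have hdist : dist w c ≤ R - s := by
        have h1 : dist w w₀ < s := mem_ball.mp hw
        have h2 := dist_triangle w w₀ c
        have h3 : dist w₀ c = R - d := by rw [hd]; ring
        rw [h3] at h2
        simp only [hs] at h1 ⊢
        linarith
      have hbge : s / R ≤ (R - dist w c) / R := by
        rw [div_le_div_iff_of_pos_right hR]
        linarith
      have h3 : ‖f w‖ * (s / R) ^ (2 / p) ≤ A := by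
        calc ‖f w‖ * (s / R) ^ (2 / p)
            ≤ ‖f w‖ * ((R - dist w c) / R) ^ (2 / p) :=
              mul_le_mul_of_nonneg_left
                (Real.rpow_le_rpow (by positivity) hbge (by positivity)) (norm_nonneg _)
          _ = g w := by simp only [hg]; ring
          _ ≤ A := hw₀max hwK
      have hsRpos : (0:ℝ) < (s / R) ^ (2 / p) := Real.rpow_pos_of_pos (by positivity) _
      rw [hT]
      have hinv : (R / s) ^ (2 / p) = ((s / R) ^ (2 / p))⁻¹ := by
        rw [← Real.inv_rpow (by positivity : (0:ℝ) ≤ s / R), inv_div]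
      rw [hinv, ← div_eq_mul_inv, le_div_iff₀ hsRpos]
      exact h3
    have hptwise : ∀ w ∈ ball w₀ s, ‖f w‖ ≤ T ^ (1 - p) * ‖f w‖ ^ p := by
      intro w hw
      rcases eq_or_lt_of_le (norm_nonneg (f w)) with h0 | h0
      · rw [← h0, Real.zero_rpow hp.ne', mul_zero]
      · calc ‖f w‖ = ‖f w‖ ^ (1 - p) * ‖f w‖ ^ p := by
              rw [← Real.rpow_add h0]; norm_num
          _ ≤ T ^ (1 - p) * ‖f w‖ ^ p :=
              mul_le_mul_of_nonneg_right
                (Real.rpow_le_rpow (norm_nonneg _) (hfle w hw) (by linarith))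
                (Real.rpow_nonneg (norm_nonneg _) _)
    have hIs1 : IntegrableOn (fun ξ => ‖f ξ‖) (ball w₀ s) :=
      (((hcont.mono hsub2).norm).integrableOn_compact
        (isCompact_closedBall _ _)).mono_set ball_subset_closedBall
    have hIps : IntegrableOn (fun ξ => ‖f ξ‖ ^ p) (ball w₀ s) := hIp.mono_set hballsub
    have hchain : π * s ^ 2 * ‖f w₀‖ ≤ T ^ (1 - p) * I := by
      calc π * s ^ 2 * ‖f w₀‖ ≤ ∫ ξ in ball w₀ s, ‖f ξ‖ := harea
        _ ≤ ∫ ξ in ball w₀ s, T ^ (1 - p) * ‖f ξ‖ ^ p :=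
            setIntegral_mono_on hIs1 (hIps.const_mul _) measurableSet_ball hptwise
        _ = T ^ (1 - p) * ∫ ξ in ball w₀ s, ‖f ξ‖ ^ p := MeasureTheory.integral_const_mul _ _
        _ ≤ T ^ (1 - p) * I := by
            apply mul_le_mul_of_nonneg_left ?_ (Real.rpow_nonneg hTpos.le _)
            exact setIntegral_mono_set hIp
              (Eventually.of_forall fun ξ => Real.rpow_nonneg (norm_nonneg _) _)
              (HasSubset.Subset.eventuallyLE hballsub)
    have hAval : A = (d / R) ^ (2 / p) * ‖f w₀‖ := hgw0
    have hfw₀le : ‖f w₀‖ ≤ T ^ (1 - p) * I / (π * s ^ 2) := by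
      rw [le_div_iff₀ (by positivity)]
      calc ‖f w₀‖ * (π * s ^ 2) = π * s ^ 2 * ‖f w₀‖ := by ring
        _ ≤ _ := hchain
    have hAle' : A ≤ ((d / R) ^ (2 / p) * ((R / s) ^ (2 / p)) ^ (1 - p) * I / (π * s ^ 2))
        * A ^ (1 - p) := by
      calc A = (d / R) ^ (2 / p) * ‖f w₀‖ := hAval
        _ ≤ (d / R) ^ (2 / p) * (T ^ (1 - p) * I / (π * s ^ 2)) :=
            mul_le_mul_of_nonneg_left hfw₀le (Real.rpow_nonneg (by positivity) _)
        _ = ((d / R) ^ (2 / p) * ((R / s) ^ (2 / p)) ^ (1 - p) * I / (π * s ^ 2))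
            * A ^ (1 - p) := by
            rw [hT, Real.mul_rpow hApos.le (Real.rpow_nonneg (by positivity) _)]
            ring
    have hApowp : A ^ p ≤ (d / R) ^ (2 / p) * ((R / s) ^ (2 / p)) ^ (1 - p) * I / (π * s ^ 2) := by
      have hA1p : 0 < A ^ (1 - p) := Real.rpow_pos_of_pos hApos _
      rw [← mul_le_mul_iff_of_pos_right hA1p]
      have hcancel : A ^ p * A ^ (1 - p) = A := by
        rw [← Real.rpow_add hApos]; norm_num
      rw [hcancel]
      exact hAle'
    have hconst : (d / R) ^ (2 / p) * ((R / s) ^ (2 / p)) ^ (1 - p) / (π * s ^ 2)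
        = 2 ^ (2 / p) / (π * R ^ 2) := by
      have h2Rd : R / s = 2 * R / d := by
        rw [hs]
        field_simp
      rw [h2Rd, ← Real.rpow_mul (by positivity : (0:ℝ) ≤ 2 * R / d)]
      rw [← rpow_ident hdpos hR hp, hs]
      field_simp
      ring
    calc ‖f c‖ ^ p ≤ A ^ p := Real.rpow_le_rpow (norm_nonneg _) hfcA hp.le
      _ ≤ (d / R) ^ (2 / p) * ((R / s) ^ (2 / p)) ^ (1 - p) * I / (π * s ^ 2) := hApowp
      _ = ((d / R) ^ (2 / p) * ((R / s) ^ (2 / p)) ^ (1 - p) / (π * s ^ 2)) * I := by ring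
      _ = 2 ^ (2 / p) / (π * R ^ 2) * I := by rw [hconst]

lemma submean_large {f : ℂ → ℂ} {c : ℂ} {R p : ℝ} (hp1 : 1 ≤ p) (hR : 0 < R)
    (hf : DifferentiableOn ℂ f (closedBall c R)) :
    ‖f c‖ ^ p ≤ 2 ^ (2 / p) / (π * R ^ 2) * ∫ ξ in ball c R, ‖f ξ‖ ^ p := by
  have hp : 0 < p := lt_of_lt_of_le one_pos hp1
  have hcont : ContinuousOn f (closedBall c R) := hf.continuousOn
  have hIn : IntegrableOn (fun ξ => ‖f ξ‖) (ball c R) :=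
    (hcont.norm.integrableOn_compact (isCompact_closedBall c R)).mono_set ball_subset_closedBall
  have hIp : IntegrableOn (fun ξ => ‖f ξ‖ ^ p) (ball c R) := norm_rpow_integrableOn hp.le hcont
  have hI0 : 0 ≤ ∫ ξ in ball c R, ‖f ξ‖ ^ p :=
    setIntegral_nonneg measurableSet_ball fun ξ _ => Real.rpow_nonneg (norm_nonneg _) p
  have hvol : (volume (ball c R)).toReal = R ^ 2 * π := by
    rw [Complex.volume_ball, ENNReal.toReal_mul, ENNReal.toReal_pow,
      ENNReal.toReal_ofReal hR.le, ENNReal.coe_toReal, NNReal.coe_real_pi]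
  have h0 : volume (ball c R) ≠ 0 := (measure_ball_pos volume c hR).ne'
  have htop : volume (ball c R) ≠ ⊤ := measure_ball_lt_top.ne
  have hgc : ContinuousOn (fun x : ℝ => x ^ p) (Ici 0) := by
    apply continuousOn_of_forall_continuousAt
    intro x _
    exact Real.continuousAt_rpow_const x p (Or.inr hp.le)
  have jensen := (convexOn_rpow hp1).map_set_average_le hgc isClosed_Ici h0 htop
    (Eventually.of_forall fun ξ => mem_Ici.mpr (norm_nonneg _)) hIn
    (by exact hIp)
  have havg : ‖f c‖ ≤ ⨍ ξ in ball c R, ‖f ξ‖ := by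
    rw [MeasureTheory.setAverage_eq, measureReal_def, hvol, smul_eq_mul, inv_mul_eq_div, le_div_iff₀ (by positivity)]
    calc ‖f c‖ * (R ^ 2 * π) = π * R ^ 2 * ‖f c‖ := by ring
      _ ≤ _ := area_mean hR hf
  have h1 : ‖f c‖ ^ p ≤ ⨍ ξ in ball c R, ‖f ξ‖ ^ p := by
    calc ‖f c‖ ^ p ≤ (⨍ ξ in ball c R, ‖f ξ‖) ^ p :=
          Real.rpow_le_rpow (norm_nonneg _) havg hp.le
      _ ≤ ⨍ ξ in ball c R, ‖f ξ‖ ^ p := by simpa [Function.comp] using jensen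
  rw [MeasureTheory.setAverage_eq, measureReal_def, hvol, smul_eq_mul] at h1
  calc ‖f c‖ ^ p ≤ (R ^ 2 * π)⁻¹ * ∫ ξ in ball c R, ‖f ξ‖ ^ p := h1
    _ ≤ 2 ^ (2 / p) / (π * R ^ 2) * ∫ ξ in ball c R, ‖f ξ‖ ^ p := by
        apply mul_le_mul_of_nonneg_right ?_ hI0
        have h2p : (1:ℝ) ≤ 2 ^ (2 / p) := by
          calc (1:ℝ) = 2 ^ (0:ℝ) := (Real.rpow_zero 2).symm
            _ ≤ 2 ^ (2 / p) :=
              Real.rpow_le_rpow_of_exponent_le one_le_two (by positivity)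
        rw [inv_eq_one_div, show R ^ 2 * π = π * R ^ 2 by ring]
        gcongr

lemma submean {f : ℂ → ℂ} {c : ℂ} {R p : ℝ} (hp : 0 < p) (hR : 0 < R)
    (hf : DifferentiableOn ℂ f (closedBall c R)) :
    ‖f c‖ ^ p ≤ 2 ^ (2 / p) / (π * R ^ 2) * ∫ ξ in ball c R, ‖f ξ‖ ^ p := by
  rcases le_or_gt p 1 with h | h
  · exact submean_small hp h hR hf
  · exact submean_large h.le hR hf

end Stmt4Aux

theorem stmt4 (ω φ τ : ℂ → ℝ) (c₁ c₂ : ℝ) (hω : IsClassLStar ω φ τ c₁ c₂)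
    (p : ℝ) (hp : 0 < p) (β : ℝ) (z : ℂ) (hz : z ∈ 𝔻) :
    ∃ M : ℝ, 1 ≤ M ∧ ∃ δ₀ > 0, ∀ δ : ℝ, 0 < δ → δ < δ₀ →
      ∀ (f : ℂ → ℂ) (U : Set ℂ), IsOpen U →
        Metric.closedBall z (δ * τ z) ⊆ U → DifferentiableOn ℂ f U →
        ‖f z‖ ^ p * ω z ^ β ≤
          M / (δ ^ 2 * τ z ^ 2) *
            ∫ ξ in Metric.ball z (δ * τ z), ‖f ξ‖ ^ p * ω ξ ^ β := by
  have hz' : ‖z‖ < 1 := by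
    simpa [𝔻, mem_ball, Complex.dist_eq] using hz
  set η := 1 - ‖z‖ with hη
  have hηpos : 0 < η := by rw [hη]; linarith
  have hτpos : 0 < τ z := hω.isL.pos z hz
  have hKsub : closedBall z (η / 2) ⊆ 𝔻 := by
    intro w hw
    have h1 : dist w z ≤ η / 2 := mem_closedBall.mp hw
    have h2 := dist_triangle w z 0
    have h3 : dist z 0 = ‖z‖ := by simp [Complex.dist_eq]
    rw [h3] at h2
    simp only [𝔻, mem_ball]
    calc dist w 0 ≤ η / 2 + ‖z‖ := by linarith
      _ < 1 := by rw [hη]; linarith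
  have hφcont : ContinuousOn φ (closedBall z (η / 2)) :=
    (hω.smooth.continuousOn).mono hKsub
  obtain ⟨B, hB⟩ := (isCompact_closedBall z (η / 2)).exists_bound_of_continuousOn hφcont
  set E := Real.exp (2 * B * |β|) with hE
  have hEpos : 0 < E := Real.exp_pos _
  refine ⟨max 1 (E * E * (2 ^ (2 / p) / Real.pi)), le_max_left _ _, η / (2 * τ z), by positivity,
    fun δ hδ hδ' f U hU hsubU hfd => ?_⟩
  set r := δ * τ z with hr
  have hrpos : 0 < r := by positivity
  have hrlt : r < η / 2 := by
    rw [hr]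
    calc δ * τ z < (η / (2 * τ z)) * τ z := mul_lt_mul_of_pos_right hδ' hτpos
      _ = η / 2 := by field_simp
  have hballK : closedBall z r ⊆ closedBall z (η / 2) := closedBall_subset_closedBall hrlt.le
  have hfd' : DifferentiableOn ℂ f (closedBall z r) := hfd.mono hsubU
  have hfcont : ContinuousOn f (closedBall z r) := hfd'.continuousOn
  set ψ : ℂ → ℝ := fun ξ => Real.exp (-2 * φ ξ * β) with hψ
  have hωψ : ∀ ξ ∈ closedBall z (η / 2), ω ξ ^ β = ψ ξ := by
    intro ξ hξ
    rw [hω.weq ξ (hKsub hξ), ← Real.exp_mul, hψ]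
  have hψbounds : ∀ ξ ∈ closedBall z (η / 2),
      Real.exp (-(2 * B * |β|)) ≤ ψ ξ ∧ ψ ξ ≤ E := by
    intro ξ hξ
    have hφB : |φ ξ| ≤ B := by
      have := hB ξ hξ
      rwa [Real.norm_eq_abs] at this
    have habs : |(-2) * φ ξ * β| ≤ 2 * B * |β| := by
      rw [abs_mul, abs_mul]
      have h2 : |(-2:ℝ)| = 2 := by norm_num
      rw [h2]
      have hβnn : (0:ℝ) ≤ |β| := abs_nonneg β
      nlinarith [abs_nonneg (φ ξ)]
    obtain ⟨hlo, hhi⟩ := abs_le.mp habs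
    constructor
    · exact Real.exp_le_exp.mpr (by linarith)
    · rw [hE]
      exact Real.exp_le_exp.mpr (by linarith)
  have hIp : IntegrableOn (fun ξ => ‖f ξ‖ ^ p) (ball z r) :=
    Stmt4Aux.norm_rpow_integrableOn hp.le hfcont
  have hψcont : ContinuousOn ψ (closedBall z r) := by
    apply Real.continuous_exp.comp_continuousOn
    exact (continuousOn_const.mul (hφcont.mono hballK)).mul continuousOn_const
  have hIpψ : IntegrableOn (fun ξ => ‖f ξ‖ ^ p * ψ ξ) (ball z r) :=
    (((hfcont.norm.rpow_const fun _ _ => Or.inr hp.le).mul hψcont).integrableOn_compact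
      (isCompact_closedBall z r)).mono_set ball_subset_closedBall
  have hcongr : (∫ ξ in ball z r, ‖f ξ‖ ^ p * ω ξ ^ β)
      = ∫ ξ in ball z r, ‖f ξ‖ ^ p * ψ ξ := by
    apply setIntegral_congr_fun measurableSet_ball
    intro ξ hξ
    show ‖f ξ‖ ^ p * ω ξ ^ β = ‖f ξ‖ ^ p * ψ ξ
    rw [hωψ ξ (hballK (ball_subset_closedBall hξ))]
  have hIψ0 : 0 ≤ ∫ ξ in ball z r, ‖f ξ‖ ^ p * ψ ξ :=
    setIntegral_nonneg measurableSet_ball fun ξ _ =>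
      mul_nonneg (Real.rpow_nonneg (norm_nonneg _) _) (Real.exp_pos _).le
  have hstep : (∫ ξ in ball z r, ‖f ξ‖ ^ p) ≤ E * ∫ ξ in ball z r, ‖f ξ‖ ^ p * ψ ξ := by
    rw [← MeasureTheory.integral_const_mul]
    apply setIntegral_mono_on hIp (hIpψ.const_mul E) measurableSet_ball
    intro ξ hξ
    have hmem := hballK (ball_subset_closedBall hξ)
    obtain ⟨hlow, -⟩ := hψbounds ξ hmem
    have h1 : 1 ≤ E * ψ ξ := by
      calc (1:ℝ) = Real.exp (2 * B * |β|) * Real.exp (-(2 * B * |β|)) := by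
            rw [← Real.exp_add]
            simp
        _ ≤ E * ψ ξ := by
            rw [hE]
            exact mul_le_mul_of_nonneg_left hlow (Real.exp_pos _).le
    calc ‖f ξ‖ ^ p = ‖f ξ‖ ^ p * 1 := (mul_one _).symm
      _ ≤ ‖f ξ‖ ^ p * (E * ψ ξ) :=
          mul_le_mul_of_nonneg_left h1 (Real.rpow_nonneg (norm_nonneg _) _)
      _ = E * (‖f ξ‖ ^ p * ψ ξ) := by ring
  have hsm := Stmt4Aux.submean hp hrpos hfd'
  have hzK : z ∈ closedBall z (η / 2) := mem_closedBall_self (by positivity)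
  have hωz : ω z ^ β ≤ E := by
    rw [hωψ z hzK]
    exact (hψbounds z hzK).2
  have hfzp : 0 ≤ ‖f z‖ ^ p := Real.rpow_nonneg (norm_nonneg _) _
  have hden : (0:ℝ) < δ ^ 2 * τ z ^ 2 := by positivity
  rw [hcongr]
  calc ‖f z‖ ^ p * ω z ^ β ≤ ‖f z‖ ^ p * E := mul_le_mul_of_nonneg_left hωz hfzp
    _ ≤ (2 ^ (2 / p) / (Real.pi * r ^ 2) * ∫ ξ in ball z r, ‖f ξ‖ ^ p) * E :=
        mul_le_mul_of_nonneg_right hsm hEpos.le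
    _ ≤ (2 ^ (2 / p) / (Real.pi * r ^ 2) * (E * ∫ ξ in ball z r, ‖f ξ‖ ^ p * ψ ξ)) * E := by
        apply mul_le_mul_of_nonneg_right ?_ hEpos.le
        exact mul_le_mul_of_nonneg_left hstep (by positivity)
    _ = E * E * (2 ^ (2 / p) / Real.pi) / (δ ^ 2 * τ z ^ 2)
        * ∫ ξ in ball z r, ‖f ξ‖ ^ p * ψ ξ := by
        rw [hr]
        field_simp
    _ ≤ max 1 (E * E * (2 ^ (2 / p) / Real.pi)) / (δ ^ 2 * τ z ^ 2)
        * ∫ ξ in ball z r, ‖f ξ‖ ^ p * ψ ξ := by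
        apply mul_le_mul_of_nonneg_right ?_ hIψ0
        exact (div_le_div_iff_of_pos_right hden).mpr (le_max_right _ _)
end
end
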